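/- arXiv:1012.2825 — 4 statements merged into one kernel-verified Lean document; each statement's English description precedes it below -/
import Mathlib

section
/- Let M be a p×q real matrix satisfying the Monge property. For each row i, let j*(i) denote the smallest column index j at which the minimum min_{1 ≤ j ≤ q} M_{ij} of row i is attained. Then j* is monotone nondecreasing: for all 1 ≤ i ≤ k ≤ p, j*(i) ≤ j*(k). -/
/-- A `p × q` real matrix satisfies the Monge property if for all `i ≤ k` and `j ≤ l`,
`M i j + M k l ≤ M i l + M k j`. -/
def MongeProperty {p q : ℕ} (M : Matrix (Fin p) (Fin q) ℝ) : Prop :=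
  ∀ i k : Fin p, ∀ j l : Fin q, i ≤ k → j ≤ l → M i j + M k l ≤ M i l + M k j

/-- In a Monge matrix, the leftmost column index attaining the row minimum is a
monotone nondecreasing function of the row. Here `jstar i` is assumed to be the
least element of the set of columns where row `i` attains its minimum. -/
theorem monge_row_minima_monotone {p q : ℕ}
    (M : Matrix (Fin p) (Fin q) ℝ) (hM : MongeProperty M)
    (jstar : Fin p → Fin q)
    (hjstar : ∀ i : Fin p,
      IsLeast {j : Fin q | ∀ j' : Fin q, M i j ≤ M i j'} (jstar i)) :
    ∀ i k : Fin p, i ≤ k → jstar i ≤ jstar k := by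
  intro i k hik
  by_contra h
  push_neg at h
  have hjl : jstar k ≤ jstar i := le_of_lt h
  have hmonge := hM i k (jstar k) (jstar i) hik hjl
  have hk := (hjstar k).1 (jstar i)
  have hi := (hjstar i).1
  have hmem : jstar k ∈ {j : Fin q | ∀ j' : Fin q, M i j ≤ M i j'} := by
    intro j'
    have : M i (jstar k) ≤ M i (jstar i) := by linarith
    exact le_trans this (hi j')
  exact absurd ((hjstar i).2 hmem) (not_le.mpr h)
end

section
/- Let f : {1,…,p} → {1,…,q+1} be monotone nondecreasing, and let M be a partial p×q real matrix whose entry M_{ij} is defined (non-blank) exactly when j ≥ f(i) (a falling staircase partial matrix). Assume that whenever 1 ≤ i ≤ k ≤ p, 1 ≤ j ≤ ℓ ≤ q and all four positions (i,j), (i,ℓ), (k,j), (k,ℓ) are non-blank, one has M_{ij} + M_{kℓ} ≤ M_{iℓ} + M_{kj}. Then there exists a (fully defined) p×q real matrix M̃ satisfying the Monge property such that M̃_{ij} = M_{ij} at every non-blank position and M̃_{ij} > M_{i'j'} for every blank position (i,j) and every non-blank position (i',j'). In particular, if at least one position is non-blank, the minimum entry of M̃ equals the minimum of the non-blank entries of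 M. -/
/-- A falling staircase partial Monge matrix can be completed to a full Monge matrix
by filling the blank entries with values larger than every non-blank entry.
Columns are 1-indexed via `(j : ℕ) + 1` for `j : Fin q`; the entry in row `i`,
column `j` is non-blank exactly when `f i ≤ (j : ℕ) + 1`, where
`f : Fin p → {1, …, q+1}` is monotone nondecreasing. In particular, if some
position is non-blank, the minimum entry of the completed matrix equals the
minimum of the non-blank entries. -/
theorem falling_staircase_monge_completion {p q : ℕ} (hp : 0 < p) (hq : 0 < q)
    (f : Fin p → ℕ) (hf : ∀ i, 1 ≤ f i ∧ f i ≤ q + 1) (hfmono : Monotone f)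
    (M : Fin p → Fin q → ℝ)
    (hM : ∀ i k : Fin p, ∀ j l : Fin q, i ≤ k → j ≤ l →
      f i ≤ (j : ℕ) + 1 → f i ≤ (l : ℕ) + 1 → f k ≤ (j : ℕ) + 1 → f k ≤ (l : ℕ) + 1 →
      M i j + M k l ≤ M i l + M k j) :
    ∃ N : Matrix (Fin p) (Fin q) ℝ, MongeProperty N ∧
      (∀ (i : Fin p) (j : Fin q), f i ≤ (j : ℕ) + 1 → N i j = M i j) ∧
      (∀ (i i' : Fin p) (j j' : Fin q),
        ¬ (f i ≤ (j : ℕ) + 1) → f i' ≤ (j' : ℕ) + 1 → M i' j' < N i j) ∧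
      ((∃ (i : Fin p) (j : Fin q), f i ≤ (j : ℕ) + 1) →
        sInf {x : ℝ | ∃ i j, N i j = x} =
          sInf {x : ℝ | ∃ (i : Fin p) (j : Fin q), f i ≤ (j : ℕ) + 1 ∧ M i j = x}) := by
  obtain ⟨B, hB0, hB⟩ : ∃ B : ℝ, 0 ≤ B ∧ ∀ i j, |M i j| ≤ B := by
    have hne : (Finset.univ : Finset (Fin p × Fin q)).Nonempty :=
      ⟨⟨⟨0, hp⟩, ⟨0, hq⟩⟩, Finset.mem_univ _⟩
    refine ⟨Finset.univ.sup' hne (fun x : Fin p × Fin q => |M x.1 x.2|), ?_, ?_⟩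
    · exact le_trans (abs_nonneg (M ⟨0, hp⟩ ⟨0, hq⟩))
        (Finset.le_sup' (fun x : Fin p × Fin q => |M x.1 x.2|)
          (Finset.mem_univ (⟨⟨0, hp⟩, ⟨0, hq⟩⟩ : Fin p × Fin q)))
    · intro i j
      exact Finset.le_sup' (fun x : Fin p × Fin q => |M x.1 x.2|) (Finset.mem_univ (i, j))
  have hBub : ∀ i j, M i j ≤ B := fun i j => (abs_le.mp (hB i j)).2
  have hBlb : ∀ i j, -B ≤ M i j := fun i j => (abs_le.mp (hB i j)).1
  obtain ⟨c, C, d, hc0, hC0, hd0, hC3B, hc2B, hd2B, hdbig⟩ :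
      ∃ c C d : ℝ, 0 ≤ c ∧ 0 ≤ C ∧ 0 ≤ d ∧ 3 * B < C ∧ 2 * B ≤ c ∧ 2 * B ≤ d ∧
        c * (p : ℝ) + C + B < d := by
    refine ⟨2 * B + 1, 3 * B + 1, (2 * B + 1) * (p : ℝ) + (3 * B + 1) + B + 1,
      by linarith, by linarith, ?_, by linarith, by linarith, ?_, by linarith⟩
    · have hp1 : (1 : ℝ) ≤ (p : ℝ) := by exact_mod_cast hp
      nlinarith
    · have hp1 : (1 : ℝ) ≤ (p : ℝ) := by exact_mod_cast hp
      nlinarith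
  set g : Fin p → Fin q → ℝ :=
    fun i j => d * ((f i : ℝ) - 2 - ((j : ℕ) : ℝ)) + c * ((i : ℕ) : ℝ) + C with hg
  -- at a blank position, g is at least C
  have hgC : ∀ (i : Fin p) (j : Fin q), ¬ f i ≤ (j : ℕ) + 1 → C ≤ g i j := by
    intro i j hij
    have h2 : (j : ℕ) + 2 ≤ f i := by omega
    have h2' : (0 : ℝ) ≤ (f i : ℝ) - 2 - ((j : ℕ) : ℝ) := by
      have : ((j : ℕ) : ℝ) + 2 ≤ (f i : ℝ) := by exact_mod_cast h2
      linarith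
    have hi0 : (0 : ℝ) ≤ ((i : ℕ) : ℝ) := by positivity
    have t1 : (0 : ℝ) ≤ d * ((f i : ℝ) - 2 - ((j : ℕ) : ℝ)) := mul_nonneg hd0 h2'
    have t2 : (0 : ℝ) ≤ c * ((i : ℕ) : ℝ) := mul_nonneg hc0 hi0
    simp only [hg]
    linarith
  set N : Matrix (Fin p) (Fin q) ℝ :=
    fun i j => if f i ≤ (j : ℕ) + 1 then M i j else g i j with hN
  have hNeq : ∀ (i : Fin p) (j : Fin q), f i ≤ (j : ℕ) + 1 → N i j = M i j := by
    intro i j h; simp only [hN, if_pos h]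
  have hNblank : ∀ (i : Fin p) (j : Fin q), ¬ f i ≤ (j : ℕ) + 1 → N i j = g i j := by
    intro i j h; simp only [hN, if_neg h]
  have hgt : ∀ (i i' : Fin p) (j j' : Fin q),
      ¬ (f i ≤ (j : ℕ) + 1) → f i' ≤ (j' : ℕ) + 1 → M i' j' < N i j := by
    intro i i' j j' h h'
    rw [hNblank i j h]
    have := hgC i j h
    have := hBub i' j'
    linarith
  refine ⟨N, ?_, hNeq, hgt, ?_⟩
  · -- Monge property
    intro i k j l hik hjl
    rcases eq_or_lt_of_le hik with rfl | hik'
    · apply le_of_eq; ring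
    rcases eq_or_lt_of_le hjl with rfl | hjl'
    · apply le_of_eq; ring
    have hfik : f i ≤ f k := hfmono (le_of_lt hik')
    have hikn : (i : ℕ) < (k : ℕ) := hik'
    have hjln : (j : ℕ) < (l : ℕ) := hjl'
    have hikR : ((i : ℕ) : ℝ) + 1 ≤ ((k : ℕ) : ℝ) := by exact_mod_cast hikn
    have hjlR : ((j : ℕ) : ℝ) + 1 ≤ ((l : ℕ) : ℝ) := by exact_mod_cast hjln
    have hfikR : ((f i : ℕ) : ℝ) ≤ (f k : ℝ) := by exact_mod_cast hfik
    have hiP : ((i : ℕ) : ℝ) + 1 ≤ (p : ℝ) := by exact_mod_cast i.2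
    have hi0 : (0 : ℝ) ≤ ((i : ℕ) : ℝ) := by positivity
    have hk0 : (0 : ℝ) ≤ ((k : ℕ) : ℝ) := by positivity
    by_cases h1 : f i ≤ (j : ℕ) + 1
    · -- (i,j) nonblank, hence (i,l) nonblank
      have h2 : f i ≤ (l : ℕ) + 1 := by omega
      by_cases h3 : f k ≤ (j : ℕ) + 1
      · -- all nonblank
        have h4 : f k ≤ (l : ℕ) + 1 := by omega
        rw [hNeq i j h1, hNeq i l h2, hNeq k j h3, hNeq k l h4]
        exact hM i k j l hik hjl h1 h2 h3 h4
      · by_cases h4 : f k ≤ (l : ℕ) + 1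
        · -- only (k,j) blank
          rw [hNeq i j h1, hNeq i l h2, hNblank k j h3, hNeq k l h4]
          have := hgC k j h3
          linarith [hBub i j, hBub k l, hBlb i l]
        · -- (k,j) and (k,l) blank
          rw [hNeq i j h1, hNeq i l h2, hNblank k j h3, hNblank k l h4]
          simp only [hg]
          have hA : d * 1 ≤ d * (((l : ℕ) : ℝ) - ((j : ℕ) : ℝ)) :=
            mul_le_mul_of_nonneg_left (by linarith) hd0
          have hm1 := hBub i j
          have hm2 := hBlb i l
          linarith
    · have h3 : ¬ f k ≤ (j : ℕ) + 1 := by omega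
      by_cases h2 : f i ≤ (l : ℕ) + 1
      · by_cases h4 : f k ≤ (l : ℕ) + 1
        · -- (i,j),(k,j) blank; (i,l),(k,l) nonblank
          rw [hNblank i j h1, hNeq i l h2, hNblank k j h3, hNeq k l h4]
          simp only [hg]
          have hA : d * ((f i : ℝ) - (f k : ℝ)) ≤ 0 :=
            mul_nonpos_of_nonneg_of_nonpos hd0 (by linarith)
          have hA2 : c * (((i : ℕ) : ℝ) - ((k : ℕ) : ℝ)) ≤ c * (-1) :=
            mul_le_mul_of_nonneg_left (by linarith) hc0
          have hm1 := hBlb i l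
          have hm2 := hBub k l
          linarith
        · -- (i,j),(k,j),(k,l) blank; (i,l) nonblank
          rw [hNblank i j h1, hNeq i l h2, hNblank k j h3, hNblank k l h4]
          simp only [hg]
          have hfl : ((f i : ℕ) : ℝ) ≤ ((l : ℕ) : ℝ) + 1 := by exact_mod_cast h2
          have hA : d * 1 ≤ d * (((l : ℕ) : ℝ) + 2 - (f i : ℝ)) :=
            mul_le_mul_of_nonneg_left (by linarith) hd0
          have hci : c * ((i : ℕ) : ℝ) ≤ c * (p : ℝ) :=
            mul_le_mul_of_nonneg_left (by linarith) hc0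
          have hm1 := hBlb i l
          linarith
      · -- (i,l) blank, hence all four blank
        have h4 : ¬ f k ≤ (l : ℕ) + 1 := by omega
        rw [hNblank i j h1, hNblank i l h2, hNblank k j h3, hNblank k l h4]
        simp only [hg]; apply le_of_eq; ring
  · -- sInf claim
    rintro ⟨i0, j0, h0⟩
    have hS'ne : ({x : ℝ | ∃ (i : Fin p) (j : Fin q), f i ≤ (j : ℕ) + 1 ∧ M i j = x}).Nonempty :=
      ⟨M i0 j0, i0, j0, h0, rfl⟩
    have hSne : ({x : ℝ | ∃ i j, N i j = x}).Nonempty := ⟨N i0 j0, i0, j0, rfl⟩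
    have hSbdd : BddBelow {x : ℝ | ∃ i j, N i j = x} := by
      refine ⟨-B, ?_⟩
      rintro x ⟨i, j, rfl⟩
      by_cases h : f i ≤ (j : ℕ) + 1
      · rw [hNeq i j h]; exact hBlb i j
      · rw [hNblank i j h]
        have := hgC i j h
        linarith
    have hS'bdd : BddBelow {x : ℝ | ∃ (i : Fin p) (j : Fin q), f i ≤ (j : ℕ) + 1 ∧ M i j = x} := by
      refine ⟨-B, ?_⟩
      rintro x ⟨i, j, _, rfl⟩
      exact hBlb i j
    have hsub : {x : ℝ | ∃ (i : Fin p) (j : Fin q), f i ≤ (j : ℕ) + 1 ∧ M i j = x} ⊆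
        {x : ℝ | ∃ i j, N i j = x} := by
      rintro x ⟨i, j, h, rfl⟩
      exact ⟨i, j, hNeq i j h⟩
    apply le_antisymm
    · exact csInf_le_csInf hSbdd hS'ne hsub
    · apply le_csInf hSne
      rintro x ⟨i, j, rfl⟩
      by_cases h : f i ≤ (j : ℕ) + 1
      · rw [hNeq i j h]
        exact csInf_le hS'bdd ⟨i, j, h, rfl⟩
      · rw [hNblank i j h]
        have h1 : sInf {x : ℝ | ∃ (i : Fin p) (j : Fin q), f i ≤ (j : ℕ) + 1 ∧ M i j = x}
            ≤ M i0 j0 := csInf_le hS'bdd ⟨i0, j0, h0, rfl⟩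
        have h2 := hBub i0 j0
        have h3 := hgC i j h
        linarith
end

section
/- Let g : {1,…,p} → {0,…,q} be monotone nondecreasing, and let M be a partial p×q real matrix whose entry M_{ij} is defined (non-blank) exactly when j ≤ g(i) (an inverse falling staircase partial matrix). Assume that whenever 1 ≤ i ≤ k ≤ p, 1 ≤ j ≤ ℓ ≤ q and all four positions (i,j), (i,ℓ), (k,j), (k,ℓ) are non-blank, one has M_{ij} + M_{kℓ} ≤ M_{iℓ} + M_{kj}. Then there exists a (fully defined) p×q real matrix M̃ satisfying the Monge property such that M̃_{ij} = M_{ij} at every non-blank position and M̃_{ij} > M_{i'j'} for every blank position (i,j) and every non-blank position (i',j'). In particular, if at least one position is non-blank, the minimum entry of M̃ equals the minimum of the non-blank entries of M. -/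
set_option maxHeartbeats 1600000 in
/-- An inverse falling staircase partial Monge matrix can be completed to a full
Monge matrix by filling the blank entries with values larger than every non-blank
entry. Columns are 1-indexed via `(j : ℕ) + 1` for `j : Fin q`; the entry in row
`i`, column `j` is non-blank exactly when `(j : ℕ) + 1 ≤ g i`, where
`g : Fin p → {0, …, q}` is monotone nondecreasing. In particular, if some position
is non-blank, the minimum entry of the completed matrix equals the minimum of the
non-blank entries. -/
theorem inverse_falling_staircase_monge_completion {p q : ℕ} (hp : 0 < p) (hq : 0 < q)
    (g : Fin p → ℕ) (hg : ∀ i, g i ≤ q) (hgmono : Monotone g)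
    (M : Fin p → Fin q → ℝ)
    (hM : ∀ i k : Fin p, ∀ j l : Fin q, i ≤ k → j ≤ l →
      (j : ℕ) + 1 ≤ g i → (l : ℕ) + 1 ≤ g i → (j : ℕ) + 1 ≤ g k → (l : ℕ) + 1 ≤ g k →
      M i j + M k l ≤ M i l + M k j) :
    ∃ N : Matrix (Fin p) (Fin q) ℝ, MongeProperty N ∧
      (∀ (i : Fin p) (j : Fin q), (j : ℕ) + 1 ≤ g i → N i j = M i j) ∧
      (∀ (i i' : Fin p) (j j' : Fin q),
        ¬ ((j : ℕ) + 1 ≤ g i) → (j' : ℕ) + 1 ≤ g i' → M i' j' < N i j) ∧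
      ((∃ (i : Fin p) (j : Fin q), (j : ℕ) + 1 ≤ g i) →
        sInf {x : ℝ | ∃ i j, N i j = x} =
          sInf {x : ℝ | ∃ (i : Fin p) (j : Fin q), (j : ℕ) + 1 ≤ g i ∧ M i j = x}) := by
  classical
  set mabs : ℝ := ∑ i : Fin p, ∑ j : Fin q, |M i j| with hmabs_def
  have habs : ∀ i j, |M i j| ≤ mabs := by
    intro i j
    calc |M i j| ≤ ∑ j', |M i j'| :=
          Finset.single_le_sum (f := fun j' => |M i j'|)
            (fun _ _ => abs_nonneg _) (Finset.mem_univ j)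
      _ ≤ mabs := Finset.single_le_sum (f := fun i => ∑ j', |M i j'|)
          (fun _ _ => Finset.sum_nonneg fun _ _ => abs_nonneg _) (Finset.mem_univ i)
  have hcast1 : ∀ n : ℕ, (1:ℝ) ≤ 1 + (n:ℝ) := by
    intro n
    have : (0:ℝ) ≤ (n:ℝ) := Nat.cast_nonneg _
    linarith
  have hmabs0 : 0 ≤ mabs :=
    Finset.sum_nonneg fun _ _ => Finset.sum_nonneg fun _ _ => abs_nonneg _
  have hMub : ∀ i j, M i j ≤ mabs := fun i j => (le_abs_self _).trans (habs i j)
  have hMlb : ∀ i j, -mabs ≤ M i j := fun i j => neg_le_of_abs_le (habs i j)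
  set c : ℝ := 3 * mabs + 3 with hc_def
  have hc3 : (3:ℝ) ≤ c := by rw [hc_def]; linarith
  have hc0 : (0:ℝ) < c := by linarith
  set D : Fin p → ℝ := fun i => c * ((q:ℝ) + 2) ^ (p - (i:ℕ)) with hD_def
  have hq2 : (1:ℝ) ≤ (q:ℝ) + 2 := by
    have : (0:ℝ) ≤ (q:ℝ) := Nat.cast_nonneg _
    linarith
  have hDc : ∀ i, c ≤ D i := by
    intro i
    have : (1:ℝ) ≤ ((q:ℝ) + 2) ^ (p - (i:ℕ)) := one_le_pow₀ hq2
    calc c = c * 1 := by ring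
      _ ≤ D i := by
        simp only [hD_def]
        exact mul_le_mul_of_nonneg_left this (le_of_lt hc0)
  have hD0 : ∀ i, 0 < D i := fun i => lt_of_lt_of_le hc0 (hDc i)
  have hDmono : ∀ i k : Fin p, (i:ℕ) ≤ (k:ℕ) → D k ≤ D i := by
    intro i k hik
    simp only [hD_def]
    have : ((q:ℝ) + 2) ^ (p - (k:ℕ)) ≤ ((q:ℝ) + 2) ^ (p - (i:ℕ)) :=
      pow_le_pow_right₀ hq2 (Nat.sub_le_sub_left hik p)
    exact mul_le_mul_of_nonneg_left this (le_of_lt hc0)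
  have hDlt : ∀ i k : Fin p, (i:ℕ) < (k:ℕ) → ((q:ℝ) + 2) * D k ≤ D i := by
    intro i k hik
    have h1 : p - (k:ℕ) + 1 ≤ p - (i:ℕ) := by omega
    have h2 : ((q:ℝ) + 2) ^ (p - (k:ℕ) + 1) ≤ ((q:ℝ) + 2) ^ (p - (i:ℕ)) :=
      pow_le_pow_right₀ hq2 h1
    simp only [hD_def]
    calc ((q:ℝ) + 2) * (c * ((q:ℝ) + 2) ^ (p - (k:ℕ)))
        = c * ((q:ℝ) + 2) ^ (p - (k:ℕ) + 1) := by ring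
      _ ≤ c * ((q:ℝ) + 2) ^ (p - (i:ℕ)) := mul_le_mul_of_nonneg_left h2 (le_of_lt hc0)
  set N : Matrix (Fin p) (Fin q) ℝ :=
    fun i j => if (j:ℕ) + 1 ≤ g i then M i j else D i * (1 + (j:ℕ)) with hN_def
  have hNval : ∀ i j, N i j = if (j:ℕ) + 1 ≤ g i then M i j else D i * (1 + (j:ℕ)) := by
    intro i j; rw [hN_def]
  refine ⟨N, ?_, ?_, ?_, ?_⟩
  · -- Monge property
    intro i k j l hik hjl
    rw [hNval, hNval, hNval, hNval]
    have hjl' : (j:ℕ) ≤ (l:ℕ) := hjl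
    have hik' : (i:ℕ) ≤ (k:ℕ) := hik
    by_cases hB : (l:ℕ) + 1 ≤ g i
    · -- all defined
      have hA : (j:ℕ) + 1 ≤ g i := by omega
      have hC : (j:ℕ) + 1 ≤ g k := hA.trans (hgmono hik)
      have hD' : (l:ℕ) + 1 ≤ g k := hB.trans (hgmono hik)
      rw [if_pos hA, if_pos hB, if_pos hC, if_pos hD']
      exact hM i k j l hik hjl hA hB hC hD'
    · rw [if_neg hB]
      by_cases hA : (j:ℕ) + 1 ≤ g i
      · -- A defined, hence C defined
        have hC : (j:ℕ) + 1 ≤ g k := hA.trans (hgmono hik)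
        rw [if_pos hA, if_pos hC]
        by_cases hD' : (l:ℕ) + 1 ≤ g k
        · -- only B blank
          rw [if_pos hD']
          have h1 := hMub i j; have h2 := hMub k l; have h3 := hMlb k j
          have h4 := hDc i
          have h5 : (1:ℝ) ≤ 1 + ((l:ℕ):ℝ) := hcast1 _
          have pr : D i * 1 ≤ D i * (1 + ((l:ℕ):ℝ)) :=
            mul_le_mul_of_nonneg_left h5 (hD0 i).le
          have hcc : c = 3 * mabs + 3 := hc_def
          linarith
        · -- B, D blank
          rw [if_neg hD']
          rcases eq_or_lt_of_le hik' with heq | hlt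
          · have : i = k := Fin.ext heq
            subst this
            linarith
          · have h1 : ((q:ℝ) + 2) * D k ≤ D i := hDlt i k hlt
            have h2 := hMub i j; have h3 := hMlb k j
            have h4 := hD0 k
            have h5 : (1:ℝ) ≤ 1 + ((l:ℕ):ℝ) := hcast1 _
            have hq0 : (0:ℝ) ≤ (q:ℝ) := Nat.cast_nonneg _
            have hqk : 0 ≤ (q:ℝ) * D k := mul_nonneg hq0 h4.le
            have h6 : D k ≤ D i - c := by nlinarith [hDc k]
            have hge : (0:ℝ) ≤ D i - D k := by linarith
            have pr : (D i - D k) * 1 ≤ (D i - D k) * (1 + ((l:ℕ):ℝ)) :=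
              mul_le_mul_of_nonneg_left h5 hge
            have hcc : c = 3 * mabs + 3 := hc_def
            nlinarith
      · -- A, B blank
        rw [if_neg hA]
        by_cases hC : (j:ℕ) + 1 ≤ g k
        · rw [if_pos hC]
          by_cases hD' : (l:ℕ) + 1 ≤ g k
          · -- A, B blank; C, D defined
            rw [if_pos hD']
            rcases eq_or_lt_of_le hjl' with heq | hlt
            · have : j = l := Fin.ext heq
              subst this; linarith
            · have h1 : (1:ℝ) ≤ (l:ℕ) - (j:ℕ) := by
                have : (j:ℕ) + 1 ≤ (l:ℕ) := hlt
                have := (Nat.cast_le (α := ℝ)).2 this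
                push_cast at this ⊢; linarith
              have h2 := hMub k l; have h3 := hMlb k j
              have pr : D i * 1 ≤ D i * (((l:ℕ):ℝ) - ((j:ℕ):ℝ)) :=
                mul_le_mul_of_nonneg_left h1 (hD0 i).le
              have hcc : c = 3 * mabs + 3 := hc_def
              nlinarith [hDc i]
          · -- A, B, D blank; C defined
            rw [if_neg hD']
            have hilt : (i:ℕ) < (k:ℕ) := by
              rcases eq_or_lt_of_le hik' with heq | hlt
              · exfalso; have : i = k := Fin.ext heq; subst this; exact hA hC
              · exact hlt
            have hjle : (j:ℕ) + 1 ≤ (l:ℕ) := by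
              have h1 : g k ≤ (l:ℕ) := by omega
              omega
            have h1 : (1:ℝ) ≤ (l:ℕ) - (j:ℕ) := by
              have := (Nat.cast_le (α := ℝ)).2 hjle
              push_cast at this ⊢; linarith
            have h2 : ((l:ℕ):ℝ) + 1 ≤ (q:ℝ) := by
              have : (l:ℕ) + 1 ≤ q := l.isLt
              exact_mod_cast this
            have h3 : ((q:ℝ) + 2) * D k ≤ D i := hDlt i k hilt
            have h4 := hD0 k
            have h5 := hMlb k j
            have h6 := hDc k
            -- need : D i * (1+j) + D k * (1+l) ≤ D i * (1+l) + M k j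
            have pr1 : D i * 1 ≤ D i * (((l:ℕ):ℝ) - ((j:ℕ):ℝ)) :=
              mul_le_mul_of_nonneg_left h1 (hD0 i).le
            have pr2 : D k * (1 + ((l:ℕ):ℝ)) ≤ D k * ((q:ℝ) + 1) :=
              mul_le_mul_of_nonneg_left (by linarith) h4.le
            have hcc : c = 3 * mabs + 3 := hc_def
            nlinarith
        · -- all four blank
          have hD' : ¬ (l:ℕ) + 1 ≤ g k := by omega
          rw [if_neg hC, if_neg hD']
          have h1 : D k ≤ D i := hDmono i k hik'
          have h2 : ((j:ℕ):ℝ) ≤ ((l:ℕ):ℝ) := by exact_mod_cast hjl'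
          have pr : 0 ≤ (D i - D k) * (((l:ℕ):ℝ) - ((j:ℕ):ℝ)) :=
            mul_nonneg (by linarith) (by linarith)
          nlinarith
  · -- agreement on defined entries
    intro i j hij
    rw [hNval, if_pos hij]
  · -- blank entries dominate
    intro i i' j j' hblank hdef
    rw [hNval, if_neg hblank]
    have h1 := hMub i' j'
    have h2 := hDc i
    have h3 : (1:ℝ) ≤ 1 + ((j:ℕ):ℝ) := hcast1 _
    have pr : D i * 1 ≤ D i * (1 + ((j:ℕ):ℝ)) :=
      mul_le_mul_of_nonneg_left h3 (hD0 i).le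
    have hcc : c = 3 * mabs + 3 := hc_def
    linarith
  · -- sInf statement
    rintro ⟨i₀, j₀, h₀⟩
    set S₁ : Set ℝ := {x : ℝ | ∃ i j, N i j = x} with hS1
    set S₂ : Set ℝ := {x : ℝ | ∃ (i : Fin p) (j : Fin q), (j : ℕ) + 1 ≤ g i ∧ M i j = x} with hS2
    have hS1eq : S₁ = Set.range (fun ij : Fin p × Fin q => N ij.1 ij.2) := by
      ext x; constructor
      · rintro ⟨i, j, h⟩; exact ⟨(i, j), h⟩
      · rintro ⟨⟨i, j⟩, h⟩; exact ⟨i, j, h⟩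
    have hS1fin : S₁.Finite := by rw [hS1eq]; exact Set.finite_range _
    have hsub : S₂ ⊆ S₁ := by
      rintro x ⟨i, j, hij, hx⟩
      exact ⟨i, j, by rw [hNval, if_pos hij]; exact hx⟩
    have hS2ne : S₂.Nonempty := ⟨M i₀ j₀, i₀, j₀, h₀, rfl⟩
    have hS1ne : S₁.Nonempty := hS2ne.mono hsub
    have hbdd1 : BddBelow S₁ := hS1fin.bddBelow
    have hbdd2 : BddBelow S₂ := hbdd1.mono hsub
    apply le_antisymm
    · exact csInf_le_csInf hbdd1 hS2ne hsub
    · apply le_csInf hS1ne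
      rintro x ⟨i, j, hx⟩
      by_cases hij : (j:ℕ) + 1 ≤ g i
      · refine csInf_le hbdd2 ⟨i, j, hij, ?_⟩
        rw [← hx, hNval, if_pos hij]
      · have h1 : sInf S₂ ≤ M i₀ j₀ := csInf_le hbdd2 ⟨i₀, j₀, h₀, rfl⟩
        have h2 : M i₀ j₀ < N i j := by
          rw [hNval, if_neg hij]
          have h3 := hMub i₀ j₀
          have h4 := hDc i
          have h5 : (1:ℝ) ≤ 1 + ((j:ℕ):ℝ) := hcast1 _
          have pr : D i * 1 ≤ D i * (1 + ((j:ℕ):ℝ)) :=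
            mul_le_mul_of_nonneg_left h5 (hD0 i).le
          have hcc : c = 3 * mabs + 3 := hc_def
          linarith
        rw [← hx] at *
        linarith
end

section
/- Let (V, ℓ) be a weighted directed graph with edge set E = {(a,b) : ℓ(a,b) < ∞}, let B ⊆ E be a piece with endpoint set V(B) and boundary ∂B = {b ∈ V(B) : b is an endpoint of some edge in E ∖ B}, and let I = V(B) ∖ ∂B be the set of internal vertices of B. Define a new length function ℓ' on V ∖ I by ℓ'(u,v) = min( ℓ₀(u,v), δ(u,v) ), where ℓ₀(u,v) = ℓ(u,v) if (u,v) ∈ E ∖ B and ∞ otherwise, and δ(u,v) = d_B(u,v) if u, v ∈ ∂B and ∞ otherwise. Then for all u, v ∈ V ∖ I, the distance from u to v in the weighted directed graph (V ∖ I, ℓ') equals d(u,v), the distance from u to v in (V, ℓ). (This is the correctness of replacing a piece by the complete graph on its boundary weighted by the shortest-path distances inside the piece, as in the dense distance graph.) -/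
open scoped ENNReal

/-- The length of a walk `w₀, w₁, …, w_k`, given as a list of vertices, with respect
to the length function `ℓ : V → V → ℝ≥0∞`: the sum `Σ ℓ (w_{i-1}) (w_i)`. -/
noncomputable def walkLen {V : Type*} (ℓ : V → V → ℝ≥0∞) : List V → ℝ≥0∞
  | [] => 0
  | [_] => 0
  | a :: b :: rest => ℓ a b + walkLen ℓ (b :: rest)

/-- `IsWalkIn F u v w` means the (nonempty) list of vertices `w` is a walk from `u`
to `v` all of whose consecutive pairs lie in `F`. -/
def IsWalkIn {V : Type*} (F : Set (V × V)) (u v : V) (w : List V) : Prop :=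
  w.head? = some u ∧ w.getLast? = some v ∧ w.Chain' (fun a b => (a, b) ∈ F)

/-- `gdist ℓ F u v` is the infimum in `[0,∞]` of the lengths of all walks from `u`
to `v` whose consecutive pairs lie in `F`. Taking `F = Set.univ` gives the distance
`d(u,v)` in the weighted directed graph `(V, ℓ)`. -/
noncomputable def gdist {V : Type*} (ℓ : V → V → ℝ≥0∞) (F : Set (V × V)) (u v : V) : ℝ≥0∞ :=
  ⨅ w ∈ {w : List V | IsWalkIn F u v w}, walkLen ℓ w

section aux
variable {V : Type*}

lemma walkLen_single (ℓ : V → V → ℝ≥0∞) (a : V) : walkLen ℓ [a] = 0 := rfl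

lemma walkLen_cons_cons (ℓ : V → V → ℝ≥0∞) (a b : V) (t : List V) :
    walkLen ℓ (a :: b :: t) = ℓ a b + walkLen ℓ (b :: t) := rfl

lemma gdist_le_walk (ℓ : V → V → ℝ≥0∞) (F : Set (V × V)) {u v : V} {w : List V}
    (h : IsWalkIn F u v w) : gdist ℓ F u v ≤ walkLen ℓ w := iInf₂_le w h

lemma isWalkIn_single (F : Set (V × V)) (u : V) : IsWalkIn F u u [u] :=
  ⟨rfl, rfl, List.isChain_singleton u⟩

lemma gdist_self_le (ℓ : V → V → ℝ≥0∞) (F : Set (V × V)) (u : V) :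
    gdist ℓ F u u ≤ 0 := by
  simpa [walkLen_single] using gdist_le_walk ℓ F (isWalkIn_single F u)

lemma gdist_le_len (ℓ : V → V → ℝ≥0∞) {F : Set (V × V)} {u v : V} (h : (u, v) ∈ F) :
    gdist ℓ F u v ≤ ℓ u v := by
  have hw : IsWalkIn F u v [u, v] := ⟨rfl, rfl, by simp [List.Chain', List.isChain_cons_cons, h]⟩
  simpa [walkLen_cons_cons, walkLen_single] using gdist_le_walk ℓ F hw

lemma gdist_mono (ℓ : V → V → ℝ≥0∞) {F G : Set (V × V)} (h : F ⊆ G) (u v : V) :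
    gdist ℓ G u v ≤ gdist ℓ F u v :=
  le_iInf₂ fun _ hw => gdist_le_walk ℓ G ⟨hw.1, hw.2.1, hw.2.2.imp fun _ _ hab => h hab⟩

lemma walkLen_append (ℓ : V → V → ℝ≥0∞) (v : V) (w₂ : List V) :
    ∀ w₁ : List V, w₁.getLast? = some v →
      walkLen ℓ (w₁ ++ w₂) = walkLen ℓ w₁ + walkLen ℓ (v :: w₂)
  | [], h => by simp at h
  | [a], h => by
      simp only [List.getLast?_singleton, Option.some.injEq] at h
      subst h; simp [walkLen_single]
  | a :: b :: t, h => by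
      rw [List.cons_append, List.cons_append, walkLen_cons_cons, ← List.cons_append,
        walkLen_append ℓ v w₂ (b :: t) (by rwa [List.getLast?_cons_cons] at h),
        walkLen_cons_cons, add_assoc]

lemma isWalkIn_append {F : Set (V × V)} {u v x : V} {w₁ w₂ : List V}
    (h₁ : IsWalkIn F u v w₁) (h₂ : IsWalkIn F v x w₂) :
    IsWalkIn F u x (w₁ ++ w₂.tail) := by
  obtain ⟨h11, h12, h13⟩ := h₁
  obtain ⟨h21, h22, h23⟩ := h₂
  rcases w₂ with _ | ⟨c, t⟩
  case nil => simp at h21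
  simp only [List.head?_cons, Option.some.injEq] at h21
  subst h21
  rcases w₁ with _ | ⟨a, t₁⟩
  case nil => simp at h11
  refine ⟨?_, ?_, ?_⟩
  · simpa using h11
  · rcases t with _ | ⟨d, t⟩
    · simp only [List.getLast?_singleton, Option.some.injEq] at h22
      simpa [h22] using h12
    · rw [List.tail_cons, List.getLast?_append_of_ne_nil _ (by simp)]
      simpa using h22
  · rw [List.tail_cons, List.Chain', List.isChain_append]
    refine ⟨h13, h23.tail, fun y hy z hz => ?_⟩
    rw [h12] at hy
    simp only [Option.mem_def, Option.some.injEq] at hy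
    subst hy
    exact (List.isChain_cons.1 h23).1 z hz

lemma gdist_triangle (ℓ : V → V → ℝ≥0∞) (F : Set (V × V)) (u v x : V) :
    gdist ℓ F u x ≤ gdist ℓ F u v + gdist ℓ F v x := by
  conv_rhs => rw [gdist, gdist]
  rw [iInf_subtype', iInf_subtype', ENNReal.iInf_add]
  refine le_iInf fun w₁ => ?_
  rw [ENNReal.add_iInf]
  refine le_iInf fun w₂ => ?_
  obtain ⟨w₁, hw₁⟩ := w₁
  obtain ⟨w₂, hw₂⟩ := w₂
  have h₁ : IsWalkIn F u v w₁ := hw₁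
  have h₂ : IsWalkIn F v x w₂ := hw₂
  rcases w₂ with _ | ⟨c, t⟩
  case nil => exact absurd h₂.1 (by simp)
  have hc : c = v := by simpa using h₂.1
  subst hc
  have := gdist_le_walk ℓ F (isWalkIn_append h₁ h₂)
  rw [List.tail_cons, walkLen_append ℓ c t w₁ h₁.2.1] at this
  exact this

lemma exists_walk (ℓ : V → V → ℝ≥0∞) {F : Set (V × V)} {u v : V}
    (h : gdist ℓ F u v ≠ ⊤) : ∃ w, IsWalkIn F u v w := by
  by_contra hc
  push_neg at hc
  apply h
  simp only [gdist, iInf_eq_top, Set.mem_setOf_eq]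
  intro w hw
  exact (hc w hw).elim

lemma isWalkIn_last_mem {F : Set (V × V)} :
    ∀ w : List V, ∀ u v, IsWalkIn F u v w → v = u ∨ ∃ e ∈ F, e.2 = v
  | [], u, v, h => by simp [IsWalkIn] at h
  | [a], u, v, h => by
      obtain ⟨h1, h2, _⟩ := h
      simp only [List.head?_cons, Option.some.injEq] at h1
      simp only [List.getLast?_singleton, Option.some.injEq] at h2
      left; rw [← h2, h1]
  | a :: c :: t, u, v, h => by
      obtain ⟨h1, h2, h3⟩ := h
      have hac : (a, c) ∈ F := (List.isChain_cons_cons.1 h3).1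
      have := isWalkIn_last_mem (c :: t) c v
        ⟨rfl, by rwa [List.getLast?_cons_cons] at h2, (List.isChain_cons_cons.1 h3).2⟩
      rcases this with h | h
      · exact Or.inr ⟨(a, c), hac, h.symm⟩
      · exact Or.inr h

end aux

open scoped Classical

/-- Correctness of the dense distance graph contraction: removing the internal
vertices `I` of a piece `B` and replacing the piece by the complete graph on its
boundary `bd`, weighted by shortest-path distances inside `B` (while keeping all
edges outside `B`), preserves all distances between the remaining vertices. -/
theorem dist_dense_distance_graph {V : Type*} [Fintype V]
    (ℓ : V → V → ℝ≥0∞) (E B : Set (V × V)) (VB bd I : Set V)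
    (hE : E = {e : V × V | ℓ e.1 e.2 < ⊤})
    (hB : B ⊆ E)
    (hVB : VB = {x : V | ∃ e ∈ B, e.1 = x ∨ e.2 = x})
    (hbd : bd = {x ∈ VB | ∃ e ∈ E \ B, e.1 = x ∨ e.2 = x})
    (hI : I = VB \ bd)
    (ℓ' : {x : V // x ∉ I} → {x : V // x ∉ I} → ℝ≥0∞)
    (hℓ' : ∀ a b : {x : V // x ∉ I},
      ℓ' a b = min (if (a.1, b.1) ∈ E \ B then ℓ a.1 b.1 else ⊤)
        (if a.1 ∈ bd ∧ b.1 ∈ bd then gdist ℓ B a.1 b.1 else ⊤)) :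
    ∀ a b : {x : V // x ∉ I},
      gdist ℓ' Set.univ a b = gdist ℓ Set.univ a.1 b.1 := by
  have hnI : ∀ s, s ∈ bd → s ∉ I := fun s hs h => by rw [hI] at h; exact h.2 hs
  have hVB_of_B : ∀ {x y : V}, (x, y) ∈ B → x ∈ VB ∧ y ∈ VB := fun {x y} h => by
    rw [hVB]; exact ⟨⟨(x, y), h, Or.inl rfl⟩, ⟨(x, y), h, Or.inr rfl⟩⟩
  have hbd_of : ∀ {x}, x ∈ VB → x ∉ I → x ∈ bd := fun {x} h1 h2 => by
    by_contra h3; exact h2 (hI ▸ ⟨h1, h3⟩)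
  have hnI_of_EB : ∀ {x y}, (x, y) ∈ E \ B → x ∉ I ∧ y ∉ I := by
    intro x y h
    constructor
    · intro hx; rw [hI] at hx
      exact hx.2 (hbd ▸ ⟨hx.1, (x, y), h, Or.inl rfl⟩)
    · intro hy; rw [hI] at hy
      exact hy.2 (hbd ▸ ⟨hy.1, (x, y), h, Or.inr rfl⟩)
  have hbd_of_walk : ∀ {s x}, s ∈ bd → gdist ℓ B s x ≠ ⊤ → x ∉ I → x ∈ bd := by
    intro s x hs h hx
    obtain ⟨w, hw⟩ := exists_walk ℓ h
    rcases isWalkIn_last_mem w s x hw with h1 | ⟨e, he, he2⟩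
    · exact h1 ▸ hs
    · exact hbd_of (he2 ▸ (hVB_of_B (x := e.1) (y := e.2) he).2) hx
  have hℓ'EB : ∀ {x y : V} (hx : x ∉ I) (hy : y ∉ I), (x, y) ∈ E \ B →
      ℓ' ⟨x, hx⟩ ⟨y, hy⟩ ≤ ℓ x y := by
    intro x y hx hy h
    rw [hℓ']
    exact le_trans (min_le_left _ _) (by simp [h])
  have hℓ'bd : ∀ {x y : V} (hx : x ∉ I) (hy : y ∉ I), x ∈ bd → y ∈ bd →
      ℓ' ⟨x, hx⟩ ⟨y, hy⟩ ≤ gdist ℓ B x y := by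
    intro x y hx hy hxb hyb
    rw [hℓ']
    exact le_trans (min_le_right _ _) (by simp [hxb, hyb])
  have key : ∀ w : List V,
      (∀ u v, IsWalkIn Set.univ u v w → ∀ (hv : v ∉ I), ∀ s, ∀ (hs : s ∈ bd),
        gdist ℓ' Set.univ ⟨s, hnI s hs⟩ ⟨v, hv⟩ ≤ gdist ℓ B s u + walkLen ℓ w) ∧
      (∀ u v, IsWalkIn Set.univ u v w → ∀ (hu : u ∉ I) (hv : v ∉ I),
        gdist ℓ' Set.univ ⟨u, hu⟩ ⟨v, hv⟩ ≤ walkLen ℓ w) := by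
    intro w
    induction w with
    | nil =>
      refine ⟨fun u v hw => ?_, fun u v hw => ?_⟩ <;> simp [IsWalkIn] at hw
    | cons a t ih =>
      rcases t with _ | ⟨c, t⟩
      · have hav : ∀ u v, IsWalkIn Set.univ u v [a] → a = u ∧ a = v := by
          intro u v h
          obtain ⟨h1, h2, _⟩ := h
          exact ⟨by simpa using h1, by simpa using h2⟩
        constructor
        · intro u v hw hv s hs
          obtain ⟨h1, h2⟩ := hav u v hw
          subst h1; subst h2
          by_cases htop : gdist ℓ B s a = ⊤
          · simp [htop]
          have hab : a ∈ bd := hbd_of_walk hs htop hv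
          calc gdist ℓ' Set.univ ⟨s, hnI s hs⟩ ⟨a, hv⟩ ≤ ℓ' ⟨s, hnI s hs⟩ ⟨a, hv⟩ :=
              gdist_le_len ℓ' (Set.mem_univ _)
            _ ≤ gdist ℓ B s a := hℓ'bd _ _ hs hab
            _ ≤ gdist ℓ B s a + walkLen ℓ [a] := le_add_right le_rfl
        · intro u v hw hu hv
          obtain ⟨h1, h2⟩ := hav u v hw
          subst h1; subst h2
          simpa [walkLen_single] using gdist_self_le ℓ' Set.univ ⟨a, hu⟩
      · have hdecomp : ∀ u v, IsWalkIn Set.univ u v (a :: c :: t) →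
            a = u ∧ IsWalkIn Set.univ c v (c :: t) := by
          intro u v h
          obtain ⟨h1, h2, h3⟩ := h
          exact ⟨by simpa using h1,
            ⟨rfl, by rwa [List.getLast?_cons_cons] at h2, (List.isChain_cons_cons.1 h3).2⟩⟩
        have hA : (∀ u v, IsWalkIn Set.univ u v (a :: c :: t) → ∀ (hv : v ∉ I),
            ∀ s, ∀ (hs : s ∈ bd),
            gdist ℓ' Set.univ ⟨s, hnI s hs⟩ ⟨v, hv⟩ ≤
              gdist ℓ B s u + walkLen ℓ (a :: c :: t)) := by
          intro u v hw hv s hs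
          obtain ⟨h1, hw'⟩ := hdecomp u v hw
          subst h1
          rw [walkLen_cons_cons]
          by_cases hlac : ℓ a c = ⊤
          · simp [hlac]
          have hacE : (a, c) ∈ E := by rw [hE]; exact lt_top_iff_ne_top.2 hlac
          by_cases hBm : (a, c) ∈ B
          · calc gdist ℓ' Set.univ ⟨s, hnI s hs⟩ ⟨v, hv⟩
                ≤ gdist ℓ B s c + walkLen ℓ (c :: t) := ih.1 c v hw' hv s hs
              _ ≤ (gdist ℓ B s a + ℓ a c) + walkLen ℓ (c :: t) :=
                  add_le_add (le_trans (gdist_triangle ℓ B s a c)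
                    (add_le_add le_rfl (gdist_le_len ℓ hBm))) le_rfl
              _ = gdist ℓ B s a + (ℓ a c + walkLen ℓ (c :: t)) := add_assoc _ _ _
          · have hEB : (a, c) ∈ E \ B := ⟨hacE, hBm⟩
            have haI : a ∉ I := (hnI_of_EB hEB).1
            have hcI : c ∉ I := (hnI_of_EB hEB).2
            by_cases htop : gdist ℓ B s a = ⊤
            · simp [htop]
            have hab : a ∈ bd := hbd_of_walk hs htop haI
            calc gdist ℓ' Set.univ ⟨s, hnI s hs⟩ ⟨v, hv⟩
                ≤ gdist ℓ' Set.univ ⟨s, hnI s hs⟩ ⟨a, haI⟩ +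
                    gdist ℓ' Set.univ ⟨a, haI⟩ ⟨v, hv⟩ := gdist_triangle ℓ' Set.univ _ _ _
              _ ≤ gdist ℓ B s a + (gdist ℓ' Set.univ ⟨a, haI⟩ ⟨c, hcI⟩ +
                    gdist ℓ' Set.univ ⟨c, hcI⟩ ⟨v, hv⟩) :=
                  add_le_add (le_trans (gdist_le_len ℓ' (Set.mem_univ _))
                    (hℓ'bd _ _ hs hab)) (gdist_triangle ℓ' Set.univ _ _ _)
              _ ≤ gdist ℓ B s a + (ℓ a c + walkLen ℓ (c :: t)) :=
                  add_le_add le_rfl (add_le_add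
                    (le_trans (gdist_le_len ℓ' (Set.mem_univ _)) (hℓ'EB haI hcI hEB))
                    (ih.2 c v hw' hcI hv))
        refine ⟨hA, ?_⟩
        intro u v hw hu hv
        obtain ⟨h1, hw'⟩ := hdecomp u v hw
        subst h1
        by_cases hVBa : a ∈ VB
        · have hab : a ∈ bd := hbd_of hVBa hu
          calc gdist ℓ' Set.univ ⟨a, hu⟩ ⟨v, hv⟩
              ≤ gdist ℓ B a a + walkLen ℓ (a :: c :: t) := hA a v hw hv a hab
            _ ≤ 0 + walkLen ℓ (a :: c :: t) := add_le_add (gdist_self_le ℓ B a) le_rfl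
            _ = walkLen ℓ (a :: c :: t) := zero_add _
        · rw [walkLen_cons_cons]
          by_cases hlac : ℓ a c = ⊤
          · simp [hlac]
          have hacE : (a, c) ∈ E := by rw [hE]; exact lt_top_iff_ne_top.2 hlac
          have hBm : (a, c) ∉ B := fun h => hVBa (hVB_of_B h).1
          have hEB : (a, c) ∈ E \ B := ⟨hacE, hBm⟩
          have hcI : c ∉ I := (hnI_of_EB hEB).2
          calc gdist ℓ' Set.univ ⟨a, hu⟩ ⟨v, hv⟩
              ≤ gdist ℓ' Set.univ ⟨a, hu⟩ ⟨c, hcI⟩ +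
                  gdist ℓ' Set.univ ⟨c, hcI⟩ ⟨v, hv⟩ := gdist_triangle ℓ' Set.univ _ _ _
            _ ≤ ℓ a c + walkLen ℓ (c :: t) := add_le_add
                (le_trans (gdist_le_len ℓ' (Set.mem_univ _)) (hℓ'EB hu hcI hEB))
                (ih.2 c v hw' hcI hv)
  have D1 : ∀ w' : List {x : V // x ∉ I}, ∀ p q : {x : V // x ∉ I},
      IsWalkIn Set.univ p q w' → gdist ℓ Set.univ p.1 q.1 ≤ walkLen ℓ' w' := by
    intro w'
    induction w' with
    | nil => intro p q h; simp [IsWalkIn] at h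
    | cons a t ih =>
      rcases t with _ | ⟨c, t⟩
      · intro p q h
        obtain ⟨h1, h2, _⟩ := h
        have h1' : a = p := by simpa using h1
        have h2' : a = q := by simpa using h2
        rw [← h1', ← h2']
        simpa [walkLen_single] using gdist_self_le ℓ Set.univ a.1
      · intro p q h
        obtain ⟨h1, h2, h3⟩ := h
        have h1' : a = p := by simpa using h1
        subst h1'
        have hw' : IsWalkIn Set.univ c q (c :: t) :=
          ⟨rfl, by rwa [List.getLast?_cons_cons] at h2, (List.isChain_cons_cons.1 h3).2⟩
        have hedge : gdist ℓ Set.univ a.1 c.1 ≤ ℓ' a c := by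
          rw [hℓ' a c]
          refine le_min ?_ ?_
          · split
            · exact gdist_le_len ℓ (Set.mem_univ _)
            · exact le_top
          · split
            · exact gdist_mono ℓ (Set.subset_univ B) _ _
            · exact le_top
        calc gdist ℓ Set.univ a.1 q.1
            ≤ gdist ℓ Set.univ a.1 c.1 + gdist ℓ Set.univ c.1 q.1 :=
              gdist_triangle ℓ Set.univ _ _ _
          _ ≤ ℓ' a c + walkLen ℓ' (c :: t) := add_le_add hedge (ih c q hw')
          _ = walkLen ℓ' (a :: c :: t) := (walkLen_cons_cons ℓ' a c t).symm
  intro a b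
  refine le_antisymm ?_ ?_
  · exact le_iInf₂ fun w hw => (key w).2 a.1 b.1 hw a.2 b.2
  · exact le_iInf₂ fun w hw => D1 w a b hw
end
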